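/- (Equivalence of (P1) and (P2).) Sensor nodes are points w_1,…,w_N ∈ ℝ² with communication radii r_n ≥ 0; the coverage area of node n is the closed ball D_n = {x ∈ ℝ² : ‖x − w_n‖ ≤ r_n}. Fix T > 0, V_max > 0 and q₀, q_F ∈ ℝ² with ‖q_F − q₀‖ ≤ V_max·T. For a finite set S ⊆ {1,…,N}, the following are equivalent: (i) there exists q : ℝ → ℝ² Lipschitz with constant V_max on [0,T] with q(0) = q₀, q(T) = q_F such that for every n ∈ S, q(t) ∈ D_n for some t ∈ [0,T]; (ii) writing K = |S|, there exist an enumeration π₁,…,π_K of S and points x₁,…,x_K ∈ ℝ² with ‖x_k − w_{π_k}‖ ≤ r_{π_k} for all k, such that, setting x₀ = q₀ and x_{K+1} = q_F, ∑_{k=1}^{K+1} ‖x_k − x_{k−1}‖ ≤ V_max·T. -/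

import Mathlib

open scoped BigOperators

variable {E : Type*} [NormedAddCommGroup E] [NormedSpace ℝ E]

private lemma segment_lemma (V a b : ℝ) (hV : 0 < V) (z0 z1 : E)
    (hd : dist z0 z1 ≤ V * (b - a)) :
    ∃ q : ℝ → E, (∀ s t, dist (q s) (q t) ≤ V * |s - t|) ∧
      (∀ t, t ≤ a → q t = z0) ∧ (∀ t, b ≤ t → q t = z1) := by
  have hab : a ≤ b := by nlinarith [dist_nonneg (x := z0) (y := z1)]
  rcases eq_or_lt_of_le hab with rfl | hlt
  · have hz : z0 = z1 := by
      have : dist z0 z1 ≤ 0 := by simpa using hd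
      exact dist_le_zero.mp this
    exact ⟨fun _ => z0, fun s t => by simpa using by positivity,
      fun t _ => rfl, fun t _ => hz⟩
  · set u : ℝ → ℝ := fun t => max 0 (min 1 ((t - a) / (b - a))) with hu
    have hba : 0 < b - a := by linarith
    have hu_lip : ∀ s t, |u s - u t| ≤ |s - t| / (b - a) := by
      intro s t
      have h1 : |u s - u t| ≤ |min 1 ((s - a) / (b - a)) - min 1 ((t - a) / (b - a))| := by
        simpa [hu, max_comm] using
          abs_max_sub_max_le_abs (min 1 ((s - a) / (b - a))) (min 1 ((t - a) / (b - a))) 0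
      have h2 : |min 1 ((s - a) / (b - a)) - min 1 ((t - a) / (b - a))| ≤
          |(s - a) / (b - a) - (t - a) / (b - a)| := by
        simpa using
          abs_min_sub_min_le_max 1 ((s - a) / (b - a)) 1 ((t - a) / (b - a))
      have h3 : (s - a) / (b - a) - (t - a) / (b - a) = (s - t) / (b - a) := by ring
      calc |u s - u t| ≤ |(s - a) / (b - a) - (t - a) / (b - a)| := h1.trans h2
        _ = |s - t| / (b - a) := by rw [h3, abs_div, abs_of_pos hba]
    refine ⟨fun t => z0 + u t • (z1 - z0), ?_, ?_, ?_⟩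
    · intro s t
      have heq : dist (z0 + u s • (z1 - z0)) (z0 + u t • (z1 - z0)) = |u s - u t| * ‖z1 - z0‖ := by
        rw [dist_eq_norm]
        have : z0 + u s • (z1 - z0) - (z0 + u t • (z1 - z0)) = (u s - u t) • (z1 - z0) := by
          module
        rw [this, norm_smul, Real.norm_eq_abs]
      rw [heq]
      have hn : ‖z1 - z0‖ ≤ V * (b - a) := by
        rw [← dist_eq_norm, dist_comm]; exact hd
      calc |u s - u t| * ‖z1 - z0‖ ≤ (|s - t| / (b - a)) * (V * (b - a)) := by
            apply mul_le_mul (hu_lip s t) hn (norm_nonneg _)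
            positivity
        _ = V * |s - t| := by field_simp
    · intro t ht
      have h0 : u t = 0 := by
        have h : (t - a) / (b - a) ≤ 0 := div_nonpos_of_nonpos_of_nonneg (by linarith) hba.le
        have : min 1 ((t - a) / (b - a)) ≤ 0 := le_trans (min_le_right _ _) h
        simp [hu, max_eq_left this]
      simp [h0]
    · intro t ht
      have h1 : (1 : ℝ) ≤ (t - a) / (b - a) := (le_div_iff₀ hba).mpr (by linarith)
      have h0 : u t = 1 := by
        rw [hu]
        simp only [min_eq_left h1]
        exact max_eq_right (by norm_num)
      show z0 + u t • (z1 - z0) = z1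
      rw [h0, one_smul]; abel

private lemma chain_lemma (V : ℝ) (hV : 0 < V) :
    ∀ (m : ℕ) (z : Fin (m + 1) → E) (τ : Fin (m + 1) → ℝ),
      (∀ i : Fin m, dist (z i.castSucc) (z i.succ) ≤ V * (τ i.succ - τ i.castSucc)) →
      ∃ q : ℝ → E, (∀ s t, dist (q s) (q t) ≤ V * |s - t|) ∧
        (∀ t, t ≤ τ 0 → q t = z 0) ∧
        (∀ t, τ (Fin.last m) ≤ t → q t = z (Fin.last m)) ∧
        (∀ i, q (τ i) = z i) := by
  intro m
  induction m with
  | zero =>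
    intro z τ _
    refine ⟨fun _ => z 0, fun s t => by simpa using by positivity,
      fun t _ => rfl, fun t _ => rfl, fun i => ?_⟩
    have : i = 0 := Fin.fin_one_eq_zero i
    rw [this]
  | succ m ih =>
    intro z τ h
    have hmono : Monotone τ := by
      refine Fin.monotone_iff_le_succ.mpr fun i => ?_
      nlinarith [h i, dist_nonneg (x := z i.castSucc) (y := z i.succ)]
    have h01 : τ 0 ≤ τ 1 := hmono (by simp [Fin.le_def])
    obtain ⟨q1, hq1lip, hq1a, hq1b⟩ :=
      segment_lemma V (τ 0) (τ 1) hV (z 0) (z 1) (by simpa using h 0)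
    obtain ⟨q2, hq2lip, hq2a, hq2b, hq2i⟩ :=
      ih (fun i => z i.succ) (fun i => τ i.succ) (fun i => by
        have := h i.succ
        exact this)
    -- q2 equals z 1 before τ 1, equals z last after τ last
    simp only [Fin.succ_zero_eq_one] at hq2a
    have hq2last : ∀ t, τ (Fin.last (m + 1)) ≤ t → q2 t = z (Fin.last (m + 1)) := by
      intro t ht
      have : (Fin.last m).succ = Fin.last (m + 1) := Fin.succ_last m
      rw [← this] at ht ⊢
      exact hq2b t ht
    have hglue1 : q1 (τ 1) = z 1 := hq1b _ le_rfl
    have hglue2 : q2 (τ 1) = z 1 := hq2a _ le_rfl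
    refine ⟨fun t => if t < τ 1 then q1 t else q2 t, ?_, ?_, ?_, ?_⟩
    · -- Lipschitz
      have key : ∀ s t, s ≤ t →
          dist (if s < τ 1 then q1 s else q2 s) (if t < τ 1 then q1 t else q2 t)
            ≤ V * |s - t| := by
        intro s t hst
        by_cases hs : s < τ 1 <;> by_cases ht : t < τ 1 <;> simp only [hs, ht, if_true, if_false]
        · exact hq1lip s t
        · -- s < τ1 ≤ t
          push_neg at ht
          calc dist (q1 s) (q2 t) ≤ dist (q1 s) (z 1) + dist (z 1) (q2 t) := dist_triangle _ _ _
            _ ≤ V * |s - τ 1| + V * |τ 1 - t| := by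
                gcongr
                · simpa [hglue1] using hq1lip s (τ 1)
                · simpa [hglue2] using hq2lip (τ 1) t
            _ = V * |s - t| := by
                rw [abs_of_nonpos (by linarith), abs_of_nonpos (by linarith),
                  abs_of_nonpos (by linarith)]
                ring
        · exact absurd (lt_of_le_of_lt hst ht) hs
        · exact hq2lip s t
      intro s t
      rcases le_total s t with hst | hst
      · exact key s t hst
      · rw [dist_comm, abs_sub_comm]; exact key t s hst
    · -- initial
      intro t ht
      by_cases hlt : t < τ 1
      · simp only [hlt, if_true]; exact hq1a t ht
      · simp only [hlt, if_false]
        push_neg at hlt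
        have ht1 : τ 1 ≤ τ 0 := le_trans hlt ht
        have hz01 : z 0 = z 1 := by
          have := h 0
          have : dist (z 0) (z 1) ≤ 0 := by
            have h0 := h 0
            simp only [Fin.castSucc_zero, Fin.succ_zero_eq_one] at h0
            nlinarith
          exact dist_le_zero.mp this
        rw [hq2a t (le_trans ht h01), hz01]
    · -- final
      intro t ht
      have h1l : τ 1 ≤ τ (Fin.last (m + 1)) := hmono (by simp [Fin.le_def])
      have : ¬ t < τ 1 := not_lt.mpr (le_trans h1l ht)
      simp only [this, if_false]
      exact hq2last t ht
    · -- waypoints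
      intro i
      refine Fin.cases ?_ ?_ i
      · by_cases hlt : τ 0 < τ 1
        · simp only [hlt, if_true]; exact hq1a _ le_rfl
        · simp only [hlt, if_false]
          push_neg at hlt
          have heq : τ 0 = τ 1 := le_antisymm h01 hlt
          have hz01 : z 0 = z 1 := by
            have h0 := h 0
            simp only [Fin.castSucc_zero, Fin.succ_zero_eq_one] at h0
            have : dist (z 0) (z 1) ≤ 0 := by nlinarith
            exact dist_le_zero.mp this
          rw [heq, hglue2, hz01]
      · intro j
        have h1j : τ 1 ≤ τ j.succ := hmono (by simp [Fin.le_def])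
        have : ¬ τ j.succ < τ 1 := not_lt.mpr h1j
        simp only [this, if_false]
        exact hq2i j


/-- Equivalence of problems (P1) and (P2): a subset `S` of sensor nodes can all be
visited by a feasible trajectory iff there is an ordering of `S` and one waypoint in
each coverage disk such that the polygonal path `q0 → x₁ → ⋯ → x_K → qF` has length
at most `Vmax * T`. -/
theorem P1_iff_P2
    (N : ℕ) (w : Fin N → EuclideanSpace ℝ (Fin 2)) (r : Fin N → ℝ)
    (hr : ∀ n, 0 ≤ r n) (T Vmax : ℝ) (hT : 0 < T) (hV : 0 < Vmax)
    (q0 qF : EuclideanSpace ℝ (Fin 2)) (hfeas : ‖qF - q0‖ ≤ Vmax * T)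
    (S : Finset (Fin N)) :
    (∃ q : ℝ → EuclideanSpace ℝ (Fin 2),
        (∀ s ∈ Set.Icc (0:ℝ) T, ∀ t ∈ Set.Icc (0:ℝ) T,
          dist (q s) (q t) ≤ Vmax * |s - t|) ∧
        q 0 = q0 ∧ q T = qF ∧
        ∀ n ∈ S, ∃ t ∈ Set.Icc (0:ℝ) T, dist (q t) (w n) ≤ r n)
    ↔ (∃ π : Fin S.card → Fin N, Function.Injective π ∧ (∀ k, π k ∈ S) ∧
        ∃ x : Fin S.card → EuclideanSpace ℝ (Fin 2),
          (∀ k, dist (x k) (w (π k)) ≤ r (π k)) ∧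
          ∑ i : Fin (S.card + 1),
            dist ((Fin.cons q0 (Fin.snoc x qF) : Fin (S.card + 2) → EuclideanSpace ℝ (Fin 2)) i.castSucc)
                 ((Fin.cons q0 (Fin.snoc x qF) : Fin (S.card + 2) → EuclideanSpace ℝ (Fin 2)) i.succ) ≤ Vmax * T) := by
  set K := S.card with hK
  constructor
  · -- P1 → P2
    rintro ⟨q, hlip, hq0, hqT, hvisit⟩
    classical
    -- choose visit times
    set t : Fin N → ℝ := fun n =>
      if h : n ∈ S then Classical.choose (hvisit n h) else 0 with htdef
    have ht_mem : ∀ n ∈ S, t n ∈ Set.Icc (0:ℝ) T := by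
      intro n hn
      simp only [htdef, dif_pos hn]
      exact (Classical.choose_spec (hvisit n hn)).1
    have ht_dist : ∀ n ∈ S, dist (q (t n)) (w n) ≤ r n := by
      intro n hn
      simp only [htdef, dif_pos hn]
      exact (Classical.choose_spec (hvisit n hn)).2
    -- order relation: by time, ties broken by index
    set rel : Fin N → Fin N → Prop := fun a b => t a < t b ∨ (t a = t b ∧ a ≤ b) with hrel
    haveI : DecidableRel rel := fun a b => Classical.dec _
    haveI : IsTrans (Fin N) rel := ⟨by
      rintro a b c (h1 | ⟨h1, h1'⟩) (h2 | ⟨h2, h2'⟩)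
      · exact Or.inl (h1.trans h2)
      · exact Or.inl (h2 ▸ h1)
      · exact Or.inl (h1 ▸ h2)
      · exact Or.inr ⟨h1.trans h2, h1'.trans h2'⟩⟩
    haveI : IsAntisymm (Fin N) rel := ⟨by
      rintro a b (h1 | ⟨h1, h1'⟩) (h2 | ⟨h2, h2'⟩)
      · exact absurd (h1.trans h2) (lt_irrefl _)
      · exact absurd h1 (h2 ▸ lt_irrefl _)
      · exact absurd h2 (h1 ▸ lt_irrefl _)
      · exact le_antisymm h1' h2'⟩
    haveI : IsTotal (Fin N) rel := ⟨by
      intro a b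
      rcases lt_trichotomy (t a) (t b) with h | h | h
      · exact Or.inl (Or.inl h)
      · rcases le_total a b with h' | h'
        · exact Or.inl (Or.inr ⟨h, h'⟩)
        · exact Or.inr (Or.inr ⟨h.symm, h'⟩)
      · exact Or.inr (Or.inl h)⟩
    set l := S.sort rel with hl
    have hlen : l.length = K := Finset.length_sort rel
    set π : Fin K → Fin N := fun k => l.get (Fin.cast hlen.symm k) with hπ
    have hπS : ∀ k, π k ∈ S := by
      intro k
      have : π k ∈ l := List.get_mem l _
      rwa [hl, Finset.mem_sort] at this
    have hπinj : Function.Injective π := by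
      intro a b hab
      have hinj := List.nodup_iff_injective_get.mp (Finset.sort_nodup (s := S) (r := rel))
      have h2 := hinj hab
      have h3 : ((Fin.cast hlen.symm a : Fin l.length) : ℕ) = ((Fin.cast hlen.symm b : Fin l.length) : ℕ) :=
        congrArg Fin.val h2
      exact Fin.ext (by simpa using h3)
    have hπmono : ∀ {a b : Fin K}, a < b → t (π a) ≤ t (π b) := by
      intro a b hab
      have hs := Finset.pairwise_sort (s := S) (r := rel)
      have := hs.rel_get_of_lt (a := Fin.cast hlen.symm a) (b := Fin.cast hlen.symm b)
        (by exact hab)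
      rcases this with h | ⟨h, _⟩
      · exact le_of_lt h
      · exact le_of_eq h
    refine ⟨π, hπinj, hπS, fun k => q (t (π k)), fun k => ht_dist _ (hπS k), ?_⟩
    -- the sum bound
    set y : Fin (K + 2) → EuclideanSpace ℝ (Fin 2) :=
      Fin.cons q0 (Fin.snoc (fun k => q (t (π k))) qF) with hy
    set g : Fin (K + 1) → ℝ := Fin.snoc (fun k => t (π k)) T with hg
    set s : Fin (K + 2) → ℝ := Fin.cons 0 g with hs
    have hg_mem : ∀ i, g i ∈ Set.Icc (0:ℝ) T := by
      intro i
      refine Fin.lastCases ?_ ?_ i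
      · rw [hg, Fin.snoc_last]; exact Set.mem_Icc.mpr ⟨hT.le, le_rfl⟩
      · intro k; rw [hg, Fin.snoc_castSucc]; exact ht_mem _ (hπS k)
    have hs_mem : ∀ j, s j ∈ Set.Icc (0:ℝ) T := by
      intro j
      refine Fin.cases ?_ ?_ j
      · rw [hs, Fin.cons_zero]; exact Set.mem_Icc.mpr ⟨le_rfl, hT.le⟩
      · intro i; rw [hs, Fin.cons_succ]; exact hg_mem i
    have hys : ∀ j, y j = q (s j) := by
      intro j
      refine Fin.cases ?_ ?_ j
      · rw [hy, hs, Fin.cons_zero, Fin.cons_zero, hq0]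
      · intro i
        rw [hy, hs, Fin.cons_succ, Fin.cons_succ]
        refine Fin.lastCases ?_ ?_ i
        · rw [hg, Fin.snoc_last, Fin.snoc_last, hqT]
        · intro k; rw [hg, Fin.snoc_castSucc, Fin.snoc_castSucc]
    have hadj : ∀ i : Fin (K + 1), s i.castSucc ≤ s i.succ := by
      intro i
      have hsucc : s i.succ = g i := by simp [hs]
      refine Fin.cases ?_ ?_ i
      · rw [show s (0 : Fin (K+1)).succ = g 0 by simp [hs]]
        simp only [hs, Fin.castSucc_zero, Fin.cons_zero]
        exact (hg_mem 0).1
      · intro k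
        rw [show s (Fin.succ k).succ = g k.succ by simp [hs]]
        have h1 : s (Fin.succ k).castSucc = t (π k) := by
          rw [← Fin.succ_castSucc]
          simp [hs, hg, Fin.snoc_castSucc]
        rw [h1]
        -- g k.succ is either t (π (k+1)) or T
        by_cases hk : (k : ℕ) + 1 < K
        · have : (k.succ : Fin (K+1)) = Fin.castSucc ⟨(k:ℕ)+1, hk⟩ := by
            apply Fin.ext; simp
          rw [this]
          simp only [hg, Fin.snoc_castSucc]
          exact hπmono (by simp [Fin.lt_def])
        · have hkK : (k : ℕ) + 1 = K := by omega
          have : (k.succ : Fin (K+1)) = Fin.last K := by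
            apply Fin.ext; simp [hkK]
          rw [this]
          simp only [hg, Fin.snoc_last]
          exact (ht_mem _ (hπS k)).2
    -- per-term bound and telescoping
    have hterm : ∀ i : Fin (K + 1),
        dist (y i.castSucc) (y i.succ) ≤ Vmax * (s i.succ - s i.castSucc) := by
      intro i
      rw [hys, hys]
      have := hlip _ (hs_mem i.castSucc) _ (hs_mem i.succ)
      calc dist (q (s i.castSucc)) (q (s i.succ)) ≤ Vmax * |s i.castSucc - s i.succ| := this
        _ = Vmax * (s i.succ - s i.castSucc) := by
            rw [abs_sub_comm, abs_of_nonneg (by linarith [hadj i])]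
    calc ∑ i : Fin (K + 1), dist (y i.castSucc) (y i.succ)
        ≤ ∑ i : Fin (K + 1), Vmax * (s i.succ - s i.castSucc) :=
          Finset.sum_le_sum fun i _ => hterm i
      _ = Vmax * ∑ i : Fin (K + 1), (s i.succ - s i.castSucc) := by
          rw [Finset.mul_sum]
      _ = Vmax * (s (Fin.last (K + 1)) - s 0) := by
          congr 1
          set f : ℕ → ℝ := fun j => if h : j < K + 2 then s ⟨j, h⟩ else 0 with hf
          have hfv : ∀ i : Fin (K + 1), s i.succ - s i.castSucc = f ((i : ℕ) + 1) - f (i : ℕ) := by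
            intro i
            have h1 : ((i : ℕ) + 1) < K + 2 := by omega
            have h2 : (i : ℕ) < K + 2 := by omega
            rw [hf]
            dsimp only
            rw [dif_pos h1, dif_pos h2]
            congr 1
          calc ∑ i : Fin (K + 1), (s i.succ - s i.castSucc)
              = ∑ i : Fin (K + 1), (f ((i : ℕ) + 1) - f (i : ℕ)) :=
                Finset.sum_congr rfl fun i _ => hfv i
            _ = ∑ j ∈ Finset.range (K + 1), (f (j + 1) - f j) :=
                Fin.sum_univ_eq_sum_range (fun j => f (j + 1) - f j) (K + 1)
            _ = f (K + 1) - f 0 := Finset.sum_range_sub f (K + 1)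
            _ = s (Fin.last (K + 1)) - s 0 := by
                rw [hf]
                dsimp only
                rw [dif_pos (by omega : K + 1 < K + 2), dif_pos (by omega : 0 < K + 2)]
                congr 1
      _ ≤ Vmax * T := by
          have h0 : s 0 = 0 := by simp [hs]
          have hl : s (Fin.last (K + 1)) ≤ T := (hs_mem _).2
          rw [h0]
          have := mul_le_mul_of_nonneg_left (by linarith : s (Fin.last (K+1)) - 0 ≤ T) (le_of_lt hV)
          linarith [this]
  · -- P2 → P1
    rintro ⟨π, hπinj, hπS, x, hx, hsum⟩
    set y : Fin (K + 2) → EuclideanSpace ℝ (Fin 2) := Fin.cons q0 (Fin.snoc x qF) with hy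
    classical
    set d : ℕ → ℝ := fun i => if h : i < K + 1 then
      dist (y (⟨i, h⟩ : Fin (K + 1)).castSucc) (y (⟨i, h⟩ : Fin (K + 1)).succ) else 0 with hd
    have hd_nonneg : ∀ i, 0 ≤ d i := by
      intro i; rw [hd]; dsimp only; split <;> [exact dist_nonneg; exact le_rfl]
    set τ : Fin (K + 2) → ℝ := fun j => (∑ i ∈ Finset.range (j : ℕ), d i) / Vmax with hτ
    have hτ0 : τ 0 = 0 := by simp [hτ]
    have hτadj : ∀ i : Fin (K + 1),
        dist (y i.castSucc) (y i.succ) = Vmax * (τ i.succ - τ i.castSucc) := by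
      intro i
      have h1 : ((i.succ : Fin (K + 2)) : ℕ) = (i : ℕ) + 1 := rfl
      have h2 : ((i.castSucc : Fin (K + 2)) : ℕ) = (i : ℕ) := rfl
      have hdv : d (i : ℕ) = dist (y i.castSucc) (y i.succ) := by
        rw [hd]; dsimp only; rw [dif_pos i.isLt]
      rw [hτ]
      dsimp only
      rw [h1, h2, ← hdv, div_sub_div_same, Finset.sum_range_succ, add_sub_cancel_left,
        mul_comm, div_mul_cancel₀ _ hV.ne']
    have hτtotal : τ (Fin.last (K + 1)) ≤ T := by
      rw [hτ]
      dsimp only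
      have hsum' : ∑ i ∈ Finset.range (K + 1), d i =
          ∑ i : Fin (K + 1), dist (y i.castSucc) (y i.succ) := by
        rw [← Fin.sum_univ_eq_sum_range]
        apply Finset.sum_congr rfl
        intro i _
        rw [hd]; dsimp only; rw [dif_pos i.isLt]
      rw [show ((Fin.last (K + 1) : Fin (K + 2)) : ℕ) = K + 1 from rfl, hsum']
      rw [div_le_iff₀ hV]
      calc ∑ i : Fin (K + 1), dist (y i.castSucc) (y i.succ) ≤ Vmax * T := hsum
        _ = T * Vmax := by ring
    have hτmono : Monotone τ := by
      refine Fin.monotone_iff_le_succ.mpr fun i => ?_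
      have := hτadj i
      nlinarith [dist_nonneg (x := y i.castSucc) (y := y i.succ)]
    obtain ⟨q, hqlip, hqinit, hqfin, hqway⟩ :=
      chain_lemma Vmax hV (K + 1) y τ (fun i => le_of_eq (hτadj i))
    refine ⟨q, fun s _ t _ => hqlip s t, ?_, ?_, ?_⟩
    · have := hqinit 0 (le_of_eq hτ0.symm)
      rw [this]; simp [hy]
    · have := hqfin T hτtotal
      rw [this]
      simp [hy, ← Fin.succ_last, Fin.cons_succ, Fin.snoc_last]
    · intro n hn
      -- n = π k for some k
      have himg : Finset.image π Finset.univ = S := by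
        apply Finset.eq_of_subset_of_card_le
        · intro a ha
          obtain ⟨k, _, rfl⟩ := Finset.mem_image.mp ha
          exact hπS k
        · rw [Finset.card_image_of_injective _ hπinj, Finset.card_univ, Fintype.card_fin]
      have : n ∈ Finset.image π Finset.univ := himg ▸ hn
      obtain ⟨k, _, rfl⟩ := Finset.mem_image.mp this
      refine ⟨τ (k.castSucc.succ), ?_, ?_⟩
      · constructor
        · rw [← hτ0]; exact hτmono (Fin.zero_le _)
        · exact le_trans (hτmono (Fin.le_last _)) hτtotal
      · have hw : q (τ k.castSucc.succ) = y k.castSucc.succ := hqway _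
        rw [hw]
        have : y k.castSucc.succ = x k := by
          simp [hy, Fin.cons_succ, Fin.snoc_castSucc]
        rw [this]
        exact hx k
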